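/- Under Assumption 1, if the step size satisfies η < (2L)^{-1}, then the sequence of Lv.k GP reasoning iterates (ω_t^(k))_{k≥0} converges: there exists ω_t^* = (θ_t^*, φ_t^*) ∈ ℝ^{m+n} such that lim_{k→∞} ω_t^(k) = ω_t^*. -/

import Mathlib

open Filter Topology

/-- if `η < (2L)⁻¹` then the Lv.k GP reasoning iterates converge to some limit
`ω_t^* = (θ_t^*, φ_t^*)`. -/
theorem lvk_gp_iterates_converge
    (m n : ℕ)
    (f g : EuclideanSpace ℝ (Fin m) → EuclideanSpace ℝ (Fin n) → ℝ)
    (hfdiff : ∀ φ, Differentiable ℝ (fun θ => f θ φ))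
    (hgdiff : ∀ θ, Differentiable ℝ (fun φ => g θ φ))
    (Lθθ Lθφ Lφθ Lφφ L : ℝ)
    (hL : L = max (max Lθθ Lθφ) (max Lφθ Lφφ))
    (hLip1 : ∀ (φ : EuclideanSpace ℝ (Fin n)) (θ₁ θ₂ : EuclideanSpace ℝ (Fin m)),
      ‖gradient (fun θ => f θ φ) θ₁ - gradient (fun θ => f θ φ) θ₂‖ ≤ Lθθ * ‖θ₁ - θ₂‖)
    (hLip2 : ∀ (θ : EuclideanSpace ℝ (Fin m)) (φ₁ φ₂ : EuclideanSpace ℝ (Fin n)),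
      ‖gradient (fun θ' => f θ' φ₁) θ - gradient (fun θ' => f θ' φ₂) θ‖ ≤ Lθφ * ‖φ₁ - φ₂‖)
    (hLip3 : ∀ (φ : EuclideanSpace ℝ (Fin n)) (θ₁ θ₂ : EuclideanSpace ℝ (Fin m)),
      ‖gradient (fun φ' => g θ₁ φ') φ - gradient (fun φ' => g θ₂ φ') φ‖ ≤ Lφθ * ‖θ₁ - θ₂‖)
    (hLip4 : ∀ (θ : EuclideanSpace ℝ (Fin m)) (φ₁ φ₂ : EuclideanSpace ℝ (Fin n)),
      ‖gradient (fun φ' => g θ φ') φ₁ - gradient (fun φ' => g θ φ') φ₂‖ ≤ Lφφ * ‖φ₁ - φ₂‖)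
    (η : ℝ) (hη : 0 < η)
    (θt : EuclideanSpace ℝ (Fin m)) (φt : EuclideanSpace ℝ (Fin n))
    (Θ : ℕ → EuclideanSpace ℝ (Fin m)) (Φ : ℕ → EuclideanSpace ℝ (Fin n))
    (hΘ0 : Θ 0 = θt) (hΦ0 : Φ 0 = φt)
    (hΘ : ∀ k : ℕ, Θ (k + 1) = θt - η • gradient (fun θ => f θ (Φ k)) θt)
    (hΦ : ∀ k : ℕ, Φ (k + 1) = φt - η • gradient (fun φ => g (Θ k) φ) φt)
    (hLpos : 0 < L) (hηL : η < (2 * L)⁻¹) :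
    ∃ (θs : EuclideanSpace ℝ (Fin m)) (φs : EuclideanSpace ℝ (Fin n)),
      Tendsto (fun k => (Θ k, Φ k)) atTop (𝓝 (θs, φs)) := by
  set Ω : ℕ → EuclideanSpace ℝ (Fin m) × EuclideanSpace ℝ (Fin n) :=
    fun k => (Θ k, Φ k) with hΩ
  set r : ℝ := η * L with hr
  have hr0 : 0 ≤ r := le_of_lt (mul_pos hη hLpos)
  have hr1 : r < 1 := by
    have h1 : η * L < (2 * L)⁻¹ * L := by
      exact mul_lt_mul_of_pos_right hηL hLpos
    have h2 : (2 * L)⁻¹ * L = 1 / 2 := by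
      field_simp
    rw [h2] at h1
    linarith
  have hLθφ : Lθφ ≤ L := by rw [hL]; exact le_max_of_le_left (le_max_right _ _)
  have hLφθ : Lφθ ≤ L := by rw [hL]; exact le_max_of_le_right (le_max_left _ _)
  -- key contraction estimates
  have keyΘ : ∀ k : ℕ, dist (Θ (k + 2)) (Θ (k + 1)) ≤ r * dist (Φ (k + 1)) (Φ k) := by
    intro k
    rw [dist_eq_norm, dist_eq_norm, hΘ (k + 1), hΘ k]
    have : θt - η • gradient (fun θ => f θ (Φ (k + 1))) θt -
        (θt - η • gradient (fun θ => f θ (Φ k)) θt) =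
        η • (gradient (fun θ => f θ (Φ k)) θt - gradient (fun θ => f θ (Φ (k + 1))) θt) := by
      module
    rw [this, norm_smul, Real.norm_eq_abs, abs_of_pos hη]
    calc η * ‖gradient (fun θ => f θ (Φ k)) θt - gradient (fun θ => f θ (Φ (k + 1))) θt‖
        ≤ η * (Lθφ * ‖Φ k - Φ (k + 1)‖) :=
          mul_le_mul_of_nonneg_left (hLip2 θt (Φ k) (Φ (k + 1))) hη.le
      _ ≤ η * (L * ‖Φ k - Φ (k + 1)‖) :=
          mul_le_mul_of_nonneg_left
            (mul_le_mul_of_nonneg_right hLθφ (norm_nonneg _)) hη.le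
      _ = r * ‖Φ (k + 1) - Φ k‖ := by rw [norm_sub_rev]; ring
  have keyΦ : ∀ k : ℕ, dist (Φ (k + 2)) (Φ (k + 1)) ≤ r * dist (Θ (k + 1)) (Θ k) := by
    intro k
    rw [dist_eq_norm, dist_eq_norm, hΦ (k + 1), hΦ k]
    have : φt - η • gradient (fun φ => g (Θ (k + 1)) φ) φt -
        (φt - η • gradient (fun φ => g (Θ k) φ) φt) =
        η • (gradient (fun φ => g (Θ k) φ) φt - gradient (fun φ => g (Θ (k + 1)) φ) φt) := by
      module
    rw [this, norm_smul, Real.norm_eq_abs, abs_of_pos hη]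
    calc η * ‖gradient (fun φ => g (Θ k) φ) φt - gradient (fun φ => g (Θ (k + 1)) φ) φt‖
        ≤ η * (Lφθ * ‖Θ k - Θ (k + 1)‖) :=
          mul_le_mul_of_nonneg_left (hLip3 φt (Θ k) (Θ (k + 1))) hη.le
      _ ≤ η * (L * ‖Θ k - Θ (k + 1)‖) :=
          mul_le_mul_of_nonneg_left
            (mul_le_mul_of_nonneg_right hLφθ (norm_nonneg _)) hη.le
      _ = r * ‖Θ (k + 1) - Θ k‖ := by rw [norm_sub_rev]; ring
  have keyΩ : ∀ k : ℕ, dist (Ω (k + 2)) (Ω (k + 1)) ≤ r * dist (Ω (k + 1)) (Ω k) := by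
    intro k
    rw [Prod.dist_eq, Prod.dist_eq]
    apply max_le
    · exact (keyΘ k).trans (mul_le_mul_of_nonneg_left (le_max_right _ _) hr0)
    · exact (keyΦ k).trans (mul_le_mul_of_nonneg_left (le_max_left _ _) hr0)
  set C : ℝ := dist (Ω 0) (Ω 1) with hC
  have hgeo : ∀ k : ℕ, dist (Ω k) (Ω (k + 1)) ≤ C * r ^ k := by
    intro k
    induction k with
    | zero => simp [hC]
    | succ k ih =>
      calc dist (Ω (k + 1)) (Ω (k + 2)) = dist (Ω (k + 2)) (Ω (k + 1)) := dist_comm _ _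
        _ ≤ r * dist (Ω (k + 1)) (Ω k) := keyΩ k
        _ = r * dist (Ω k) (Ω (k + 1)) := by rw [dist_comm]
        _ ≤ r * (C * r ^ k) := mul_le_mul_of_nonneg_left ih hr0
        _ = C * r ^ (k + 1) := by ring
  have hcauchy : CauchySeq Ω := cauchySeq_of_le_geometric r C hr1 hgeo
  obtain ⟨p, hp⟩ := cauchySeq_tendsto_of_complete hcauchy
  exact ⟨p.1, p.2, by simpa using hp⟩
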